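/- Fix v ∈ ℂ^N with |v_1| ≥ ⋯ ≥ |v_N| and m ≤ N. Let q* = min{ q ≤ m : |v_{q+1}| < (1/(m-q)) ∑_{i=q+1}^N |v_i| } and g(q) = (1/(m-q))(∑_{i=q+1}^N |v_i|)². Then f(q*) ≤ min_{q ≤ m} g(q), where f(q) = g(q) - ∑_{i=q+1}^N |v_i|². In other words, the optimal m-sparse unbiased sparsification of v satisfies E‖Φ(v) - v‖² ≤ min_{i ≤ m} (1/(m-i))(∑_{j=i+1}^N |v_j|)². -/

import Mathlib

open BigOperators

/-- Tail sum of absolute values: entries with (0-based) index `≥ q`. -/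
noncomputable def tailAbs {N : ℕ} (v : Fin N → ℂ) (q : ℕ) : ℝ :=
  ∑ i ∈ Finset.univ.filter (fun i : Fin N => q ≤ (i : ℕ)), ‖v i‖

/-- Tail sum of squared absolute values. -/
noncomputable def tailSq {N : ℕ} (v : Fin N → ℂ) (q : ℕ) : ℝ :=
  ∑ i ∈ Finset.univ.filter (fun i : Fin N => q ≤ (i : ℕ)), ‖v i‖ ^ 2

noncomputable def fObj {N : ℕ} (v : Fin N → ℂ) (m q : ℕ) : ℝ :=
  1 / ((m : ℝ) - q) * (tailAbs v q) ^ 2 - tailSq v q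

noncomputable def gObj {N : ℕ} (v : Fin N → ℂ) (m q : ℕ) : ℝ :=
  1 / ((m : ℝ) - q) * (tailAbs v q) ^ 2

/-- The magnitude of the entry at (0-based) position `q`, or `0` if out of range. -/
noncomputable def entryAbs {N : ℕ} (v : Fin N → ℂ) (q : ℕ) : ℝ :=
  if h : q < N then ‖v ⟨q, h⟩‖ else 0

lemma tail_step {N : ℕ} (F : Fin N → ℝ) (q : ℕ) :
    ∑ i ∈ Finset.univ.filter (fun i : Fin N => q ≤ (i : ℕ)), F i
    = (if h : q < N then F ⟨q, h⟩ else 0)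
      + ∑ i ∈ Finset.univ.filter (fun i : Fin N => q + 1 ≤ (i : ℕ)), F i := by
  by_cases h : q < N
  · rw [dif_pos h]
    have hset : Finset.univ.filter (fun i : Fin N => q ≤ (i : ℕ))
        = insert ⟨q, h⟩ (Finset.univ.filter (fun i : Fin N => q + 1 ≤ (i : ℕ))) := by
      ext i
      simp only [Finset.mem_filter, Finset.mem_univ, true_and, Finset.mem_insert,
        Fin.ext_iff]
      omega
    rw [hset, Finset.sum_insert]
    simp
  · rw [dif_neg h]
    have h1 : Finset.univ.filter (fun i : Fin N => q ≤ (i : ℕ)) = ∅ := by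
      apply Finset.filter_eq_empty_iff.mpr
      intro i _
      omega
    have h2 : Finset.univ.filter (fun i : Fin N => q + 1 ≤ (i : ℕ)) = ∅ := by
      apply Finset.filter_eq_empty_iff.mpr
      intro i _
      omega
    rw [h1, h2]
    simp

lemma tailAbs_step {N : ℕ} (v : Fin N → ℂ) (q : ℕ) :
    tailAbs v q = entryAbs v q + tailAbs v (q + 1) := by
  unfold tailAbs entryAbs
  exact tail_step (fun i => ‖v i‖) q

lemma tailSq_step {N : ℕ} (v : Fin N → ℂ) (q : ℕ) :
    tailSq v q = (entryAbs v q) ^ 2 + tailSq v (q + 1) := by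
  unfold tailSq entryAbs
  rw [tail_step (fun i => ‖v i‖ ^ 2) q]
  congr 1
  by_cases h : q < N
  · rw [dif_pos h, dif_pos h]
  · rw [dif_neg h, dif_neg h]; ring

lemma tailAbs_nonneg {N : ℕ} (v : Fin N → ℂ) (q : ℕ) : 0 ≤ tailAbs v q :=
  Finset.sum_nonneg fun i _ => norm_nonneg _

lemma tailSq_nonneg {N : ℕ} (v : Fin N → ℂ) (q : ℕ) : 0 ≤ tailSq v q :=
  Finset.sum_nonneg fun i _ => sq_nonneg _

lemma entryAbs_nonneg {N : ℕ} (v : Fin N → ℂ) (q : ℕ) : 0 ≤ entryAbs v q := by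
  unfold entryAbs
  split
  · exact norm_nonneg _
  · exact le_refl 0

/-- f is nondecreasing (as long as we stay strictly below `m`). -/
lemma fObj_step {N m : ℕ} (v : Fin N → ℂ) (q : ℕ) (hq : q + 2 ≤ m) :
    fObj v m q ≤ fObj v m (q + 1) := by
  have hk : (2 : ℝ) ≤ (m : ℝ) - q := by
    have : ((q : ℝ) + 2) ≤ m := by exact_mod_cast hq
    linarith
  set k : ℝ := (m : ℝ) - q with hkdef
  have hk1 : (0 : ℝ) < k - 1 := by linarith
  have hk0 : (0 : ℝ) < k := by linarith
  set a := entryAbs v q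
  set T := tailAbs v (q + 1)
  set S := tailSq v (q + 1)
  have hA : tailAbs v q = a + T := tailAbs_step v q
  have hS : tailSq v q = a ^ 2 + S := tailSq_step v q
  unfold fObj
  rw [hA, hS]
  have hcast : ((q + 1 : ℕ) : ℝ) = (q : ℝ) + 1 := by push_cast; ring
  rw [hcast]
  have hkk : (m : ℝ) - ((q : ℝ) + 1) = k - 1 := by rw [hkdef]; ring
  rw [hkk]
  have key : ((a + T) ^ 2 - k * a ^ 2) / k ≤ T ^ 2 / (k - 1) := by
    rw [div_le_div_iff₀ hk0 hk1]
    nlinarith [sq_nonneg (T - (k - 1) * a)]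
  have h1 : 1 / k * (a + T) ^ 2 - (a ^ 2 + S)
      = ((a + T) ^ 2 - k * a ^ 2) / k - S := by
    field_simp
    ring
  have h2 : 1 / (k - 1) * T ^ 2 - S = T ^ 2 / (k - 1) - S := by ring
  rw [h1, h2]
  linarith

/-- g decreases by one step when the pivot condition fails. -/
lemma gObj_step {N m : ℕ} (v : Fin N → ℂ) (q : ℕ) (hq : q + 1 ≤ m)
    (hfail : tailAbs v q ≤ ((m : ℝ) - q) * entryAbs v q) :
    gObj v m (q + 1) ≤ gObj v m q := by
  set a := entryAbs v q
  set T := tailAbs v (q + 1)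
  have hA : tailAbs v q = a + T := tailAbs_step v q
  have hT : (0 : ℝ) ≤ T := tailAbs_nonneg v _
  have ha : (0 : ℝ) ≤ a := entryAbs_nonneg v q
  have hAT : (0 : ℝ) ≤ a + T := by linarith
  unfold gObj
  rw [hA]
  have hcast : ((q + 1 : ℕ) : ℝ) = (q : ℝ) + 1 := by push_cast; ring
  rw [hcast]
  rcases eq_or_lt_of_le hq with heq | hlt
  · -- q + 1 = m : the left side is 0
    have : (m : ℝ) - ((q : ℝ) + 1) = 0 := by
      have : ((q : ℝ) + 1) = m := by exact_mod_cast congrArg (Nat.cast : ℕ → ℝ) heq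
      linarith
    rw [this]
    simp only [div_zero, one_div, inv_zero, zero_mul]
    have hk : (0 : ℝ) < (m : ℝ) - q := by
      have : (q : ℝ) < m := by exact_mod_cast Nat.lt_of_succ_le hq
      linarith
    positivity
  · have hk : (2 : ℝ) ≤ (m : ℝ) - q := by
      have : ((q : ℝ) + 2) ≤ m := by exact_mod_cast hlt
      linarith
    set k : ℝ := (m : ℝ) - q with hkdef
    have hkk : (m : ℝ) - ((q : ℝ) + 1) = k - 1 := by rw [hkdef]; ring
    rw [hkk]
    have hk1 : (0 : ℝ) < k - 1 := by linarith
    have hk0 : (0 : ℝ) < k := by linarith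
    rw [hA] at hfail
    -- k * T ≤ (k - 1) * (a + T)
    have hstep : k * T ≤ (k - 1) * (a + T) := by nlinarith
    rw [one_div_mul_eq_div, one_div_mul_eq_div, div_le_div_iff₀ hk1 hk0]
    nlinarith [mul_le_mul hstep hstep (by positivity) (by positivity),
      sq_nonneg (a + T)]

lemma fObj_le_gObj {N m : ℕ} (v : Fin N → ℂ) (q : ℕ) :
    fObj v m q ≤ gObj v m q := by
  have := tailSq_nonneg v q
  unfold fObj gObj
  linarith

theorem pivotal_threshold_error_bound {N m : ℕ} (v : Fin N → ℂ)
    (hsort : ∀ j k : Fin N, j ≤ k → ‖v k‖ ≤ ‖v j‖)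
    (hm0 : 0 < m) (hmN : m ≤ N)
    (qstar : ℕ) (hqs : qstar ≤ m)
    (hcond : ((m : ℝ) - qstar) * entryAbs v qstar < tailAbs v qstar)
    (hmin : ∀ q < qstar, ¬ (((m : ℝ) - q) * entryAbs v q < tailAbs v q)) :
    ∀ q < m, fObj v m qstar ≤ gObj v m q := by
  -- g chain: g(qstar) ≤ g(q) for q ≤ qstar
  have gchain : ∀ d : ℕ, gObj v m qstar ≤ gObj v m (qstar - d) := by
    intro d
    induction d with
    | zero => simp
    | succ d ih =>
      by_cases h : qstar - (d + 1) = qstar - d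
      · rw [h]; exact ih
      · have hlt : qstar - (d + 1) < qstar := by omega
        have hsucc : (qstar - (d + 1)) + 1 = qstar - d := by omega
        have hfail := hmin (qstar - (d + 1)) hlt
        push_neg at hfail
        have hstep := gObj_step (m := m) v (qstar - (d + 1))
          (by omega) hfail
        rw [hsucc] at hstep
        exact le_trans ih hstep
  -- f chain: f(qstar) ≤ f(q) for qstar ≤ q < m
  have fchain : ∀ q : ℕ, qstar ≤ q → q < m → fObj v m qstar ≤ fObj v m q := by
    intro q hq
    induction q, hq using Nat.le_induction with
    | base => intro _; exact le_refl _
    | succ q hq ih =>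
      intro hlt
      have hqm : q < m := Nat.lt_of_succ_lt hlt
      exact le_trans (ih hqm) (fObj_step v q (by omega))
  intro q hq
  rcases le_or_gt q qstar with hle | hlt
  · have h1 : fObj v m qstar ≤ gObj v m qstar := fObj_le_gObj v qstar
    have h2 := gchain (qstar - q)
    have : qstar - (qstar - q) = q := by omega
    rw [this] at h2
    linarith
  · exact le_trans (fchain q (le_of_lt hlt) hq) (fObj_le_gObj v q)
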